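/- arXiv:2007.06170 — 2 statements merged into one kernel-verified Lean document; each statement's English description precedes it below -/
import Mathlib

section
/- With the renormalised null coordinate ūsʳ = r₀·log((ūs + r₀)/r₀), the acceleration coefficient transforms as 2ωʳ = 1/r₀ + 2ω·(ūs + r₀)/r₀; substituting ω = -(1/(2r) + 1/(2r₀))·(s/r)·exp((s+r₀)/r₀)·exp(-r/r₀) and the defining relation (r - r₀) exp(r/r₀) = (ūs + r₀)(s/r₀) exp((s + r₀)/r₀) yields ωʳ = r₀/(2r²). -/
/-- With the renormalised null coordinate `ūsʳ = r₀·log((ūs+r₀)/r₀)`,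
the acceleration coefficient transforms as `2ωʳ = 1/r₀ + 2ω·(ūs+r₀)/r₀`; substituting
`ω = -(1/(2r) + 1/(2r₀))·(s/r)·exp((s+r₀)/r₀)·exp(-r/r₀)` and the defining relation
`(r-r₀)·exp(r/r₀) = (ūs+r₀)·(s/r₀)·exp((s+r₀)/r₀)` yields `ωʳ = r₀/(2r²)`. -/
theorem stmt4 (r₀ r s us ω ωr : ℝ) (hr₀ : 0 < r₀) (hr : r ≠ 0)
    (hs : s ≠ 0) (hus : us + r₀ ≠ 0)
    (hrel : (r - r₀) * Real.exp (r / r₀)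
      = (us + r₀) * (s / r₀) * Real.exp ((s + r₀) / r₀))
    (hω : ω = -(1 / (2 * r) + 1 / (2 * r₀)) * (s / r)
      * Real.exp ((s + r₀) / r₀) * Real.exp (-r / r₀))
    (hωr : 2 * ωr = 1 / r₀ + 2 * ω * (us + r₀) / r₀) :
    ωr = r₀ / (2 * r ^ 2) := by
  have hr₀' : r₀ ≠ 0 := hr₀.ne'
  have hE2 : Real.exp (r / r₀) ≠ 0 := Real.exp_ne_zero _
  have hneg : Real.exp (-r / r₀) = (Real.exp (r / r₀))⁻¹ := by
    rw [← Real.exp_neg]; ring_nf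
  -- key: ω * (us + r₀) = -(1/(2r)+1/(2r₀)) * (1/r) * r₀ * (r - r₀)
  have key : ω * (us + r₀) = -(1 / (2 * r) + 1 / (2 * r₀)) * (1 / r) * r₀ * (r - r₀) := by
    have hrel' : r₀ * ((r - r₀) * Real.exp (r / r₀))
        = (us + r₀) * s * Real.exp ((s + r₀) / r₀) := by
      rw [hrel]; field_simp
    rw [hω, hneg]
    field_simp
    linear_combination (r+r₀) * hrel'
  have h2 : 2 * ωr = 1 / r₀ + 2 * (ω * (us + r₀)) / r₀ := by
    rw [hωr]; ring
  rw [key] at h2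
  field_simp at h2 ⊢
  have h3 : 2 * ωr * r ^ 2 * r₀ = r₀ * r₀ := by linear_combination h2
  exact mul_right_cancel₀ (by positivity) h3
end

section
/- Let ξ be a smooth 1-form on the unit round sphere (S², γ̊) and R₁, R₂, R₃ the rotation vector fields. Then Σᵢ₌₁³ |L_{Rᵢ} ξ|²_γ̊ = |∇̊ξ|²_γ̊ + |ξ|²_γ̊, where L denotes the Lie derivative and ∇̊ the Levi-Civita connection of γ̊. -/
/-!
**Statement 8.** For a smooth 1-form `ξ` on the round unit sphere `(S², γ̊)` and the
rotation (Killing) fields `R₁, R₂, R₃`:  `∑ᵢ |L_{Rᵢ} ξ|²_γ̊ = |∇̊ξ|²_γ̊ + |ξ|²_γ̊`.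

Extrinsic formalization: since the `Rᵢ` are Killing fields, under the metric identification
of 1-forms with tangent vector fields `X = ξ♯` one has `(L_{Rᵢ}ξ)♯ = [Rᵢ, X]`, and all the
pointwise norms are preserved.  The bracket at `x` is
`[Rᵢ, X](x) = DX(x)(eᵢ×x) - eᵢ×X(x)`, the covariant derivative is
`∇̊_v X = P_x (D(P X)(x)(P_x v))`, and `|∇̊X|² = ∑ᵢ ‖∇̊_{P eᵢ}X‖²`.  Both sides depend only
on the restriction of the tangential field `X` to the sphere.
-/

noncomputable section
open scoped RealInnerProductSpace

abbrev E3 := EuclideanSpace ℝ (Fin 3)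

def eb (i : Fin 3) : E3 := EuclideanSpace.single i 1

def cross3 (a b : E3) : E3 :=
  (EuclideanSpace.equiv (Fin 3) ℝ).symm
    ![a 1 * b 2 - a 2 * b 1, a 2 * b 0 - a 0 * b 2, a 0 * b 1 - a 1 * b 0]

def rotF (i : Fin 3) (x : E3) : E3 := cross3 (eb i) x

def tproj (x v : E3) : E3 := v - (⟪x, v⟫ / ⟪x, x⟫) • x

/-- covariant derivative `∇̊_v X` on the sphere (extrinsic) -/
def covDV (X : E3 → E3) (x v : E3) : E3 :=
  tproj x (fderiv ℝ (fun y => tproj y (X y)) x (tproj x v))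


private lemma inner_three (a b : E3) : ⟪a, b⟫ = a 0 * b 0 + a 1 * b 1 + a 2 * b 2 := by
  simp [PiLp.inner_apply, Fin.sum_univ_three]
  try ring

private lemma tproj_sub_smul (x p : E3) (s : ℝ) (hxx : ⟪x, x⟫ = (1:ℝ)) :
    tproj x (p - s • x) = tproj x p := by
  unfold tproj
  rw [inner_sub_right, inner_smul_right, hxx]
  module

private lemma covDV_eq (X : E3 → E3) (hX : Differentiable ℝ X) (x : E3)
    (hxx : ⟪x, x⟫ = (1:ℝ)) (hux : ⟪x, X x⟫ = (0:ℝ)) (v : E3) :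
    covDV X x v = tproj x (fderiv ℝ X x (tproj x v)) := by
  have hXx := (hX x).hasFDerivAt
  have hid := hasFDerivAt_id (𝕜 := ℝ) x
  have hnumd : DifferentiableAt ℝ (fun y : E3 => ⟪y, X y⟫) x :=
    (hid.inner ℝ hXx).differentiableAt
  have hdend : DifferentiableAt ℝ (fun y : E3 => ⟪y, y⟫) x :=
    (hid.inner ℝ hid).differentiableAt
  have hqd : DifferentiableAt ℝ (fun y : E3 => ⟪y, X y⟫ * (⟪y, y⟫)⁻¹) x :=
    hnumd.mul (hdend.inv (by rw [hxx]; norm_num))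
  have hq := hqd.hasFDerivAt
  have hq0 : ⟪x, X x⟫ * (⟪x, x⟫)⁻¹ = 0 := by rw [hux]; ring
  have hsm := hq.smul hid
  have hF := hXx.sub hsm
  have hFeq : (fun y : E3 => X y - (⟪y, X y⟫ * (⟪y, y⟫)⁻¹) • y) = fun y => tproj y (X y) := by
    funext y; simp [tproj, div_eq_mul_inv]
  simp only [id_eq] at hF
  change HasFDerivAt (fun y : E3 => X y - (⟪y, X y⟫ * (⟪y, y⟫)⁻¹) • y) _ x at hF
  rw [hFeq] at hF
  unfold covDV
  rw [hF.fderiv]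
  simp only [ContinuousLinearMap.coe_sub', Pi.sub_apply, ContinuousLinearMap.add_apply,
    ContinuousLinearMap.coe_smul', Pi.smul_apply, ContinuousLinearMap.smulRight_apply,
    ContinuousLinearMap.id_apply, hq0, zero_smul, zero_add]
  exact tproj_sub_smul x _ _ hxx

private lemma tangent_deriv (X : E3 → E3) (hX : Differentiable ℝ X)
    (htan : ∀ y : E3, ‖y‖ = 1 → ⟪X y, y⟫ = 0) (x : E3) (hx : ‖x‖ = 1) (i : Fin 3) :
    ⟪X x, cross3 (eb i) x⟫ + ⟪fderiv ℝ X x (cross3 (eb i) x), x⟫ = 0 := by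
  set w := cross3 (eb i) x with hw
  set c : ℝ → E3 := fun t =>
    Real.cos t • x + Real.sin t • w + ((1 - Real.cos t) * x i) • eb i with hc
  have hx1 : x 0 ^ 2 + x 1 ^ 2 + x 2 ^ 2 = 1 := by
    have h := real_inner_self_eq_norm_sq x
    rw [hx, inner_three] at h
    nlinarith [h]
  have hnorm : ∀ t, ‖c t‖ = 1 := by
    intro t
    have h2 : ⟪c t, c t⟫ = 1 := by
      rw [inner_three]
      have e0 : c t 0 = Real.cos t * x 0 + Real.sin t * w 0 + (1 - Real.cos t) * x i * eb i 0 := by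
        simp [hc]
      have e1 : c t 1 = Real.cos t * x 1 + Real.sin t * w 1 + (1 - Real.cos t) * x i * eb i 1 := by
        simp [hc]
      have e2 : c t 2 = Real.cos t * x 2 + Real.sin t * w 2 + (1 - Real.cos t) * x i * eb i 2 := by
        simp [hc]
      rw [e0, e1, e2]
      have hsc := Real.sin_sq_add_cos_sq t
      fin_cases i <;>
        [ (simp only [hw, cross3, eb]; simp [EuclideanSpace.single_apply];
           linear_combination (x 1 ^ 2 + x 2 ^ 2) * hsc + hx1);
          (simp only [hw, cross3, eb]; simp [EuclideanSpace.single_apply];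
           linear_combination (x 0 ^ 2 + x 2 ^ 2) * hsc + hx1);
          (simp only [hw, cross3, eb]; simp [EuclideanSpace.single_apply];
           linear_combination (x 0 ^ 2 + x 1 ^ 2) * hsc + hx1)]
    have h3 : ‖c t‖ ^ 2 = 1 := by rw [← real_inner_self_eq_norm_sq]; exact h2
    nlinarith [norm_nonneg (c t), h3]
  have hc0 : c 0 = x := by
    simp [hc]
  have hcd : HasDerivAt c w 0 := by
    have h1 := (Real.hasDerivAt_cos 0).smul_const x
    have h2 := (Real.hasDerivAt_sin 0).smul_const w
    have h3 : HasDerivAt (fun t => ((1 - Real.cos t) * x i) • eb i)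
        ((Real.sin 0 * x i) • eb i) 0 := by
      have := (((hasDerivAt_const 0 (1:ℝ)).sub (Real.hasDerivAt_cos 0)).mul_const (x i)).smul_const (eb i)
      simpa using this
    have := (h1.add h2).add h3
    simp at this
    exact this
  have hXc : HasDerivAt (fun t => X (c t)) (fderiv ℝ X x w) 0 := by
    have hl : HasFDerivAt X (fderiv ℝ X x) (c 0) := by rw [hc0]; exact (hX x).hasFDerivAt
    exact hl.comp_hasDerivAt 0 hcd
  have hphi := hXc.inner ℝ hcd
  have hzero : (fun t => ⟪X (c t), c t⟫) = fun _ => (0:ℝ) :=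
    funext fun t => htan _ (hnorm t)
  rw [hzero] at hphi
  have hval := (hasDerivAt_const (0:ℝ) (0:ℝ)).unique hphi
  rw [hc0] at hval
  linarith [hval]


set_option maxHeartbeats 1000000 in
set_option maxRecDepth 8000 in
theorem stmt8 (X : E3 → E3) (hX : Differentiable ℝ X)
    (htan : ∀ y : E3, ‖y‖ = 1 → ⟪X y, y⟫ = 0)
    (x : E3) (hx : ‖x‖ = 1) :
    ∑ i : Fin 3, ‖fderiv ℝ X x (rotF i x) - cross3 (eb i) (X x)‖ ^ 2
      = (∑ i : Fin 3, ‖covDV X x (eb i)‖ ^ 2) + ‖X x‖ ^ 2 := by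
  have hxx : ⟪x, x⟫ = (1:ℝ) := by rw [real_inner_self_eq_norm_sq, hx]; norm_num
  have hux : ⟪x, X x⟫ = (0:ℝ) := by rw [real_inner_comm]; exact htan x hx
  have hcov : ∀ v, covDV X x v = tproj x (fderiv ℝ X x (tproj x v)) :=
    covDV_eq X hX x hxx hux
  have htp : ∀ v : E3, tproj x v = v - ⟪x, v⟫ • x := by
    intro v; rw [tproj, hxx]; norm_num
  have hcr0 : ∀ p q : E3, cross3 p q 0 = p 1 * q 2 - p 2 * q 1 := fun p q => by simp [cross3]
  have hcr1 : ∀ p q : E3, cross3 p q 1 = p 2 * q 0 - p 0 * q 2 := fun p q => by simp [cross3]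
  have hcr2 : ∀ p q : E3, cross3 p q 2 = p 0 * q 1 - p 1 * q 0 := fun p q => by simp [cross3]
  have hv00 : cross3 (eb 0) x 0 = 0 := by rw [hcr0]; simp [eb, EuclideanSpace.single_apply]
  have hv01 : cross3 (eb 0) x 1 = -x 2 := by rw [hcr1]; simp [eb, EuclideanSpace.single_apply]
  have hv02 : cross3 (eb 0) x 2 = x 1 := by rw [hcr2]; simp [eb, EuclideanSpace.single_apply]
  have hv10 : cross3 (eb 1) x 0 = x 2 := by rw [hcr0]; simp [eb, EuclideanSpace.single_apply]
  have hv11 : cross3 (eb 1) x 1 = 0 := by rw [hcr1]; simp [eb, EuclideanSpace.single_apply]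
  have hv12 : cross3 (eb 1) x 2 = -x 0 := by rw [hcr2]; simp [eb, EuclideanSpace.single_apply]
  have hv20 : cross3 (eb 2) x 0 = -x 1 := by rw [hcr0]; simp [eb, EuclideanSpace.single_apply]
  have hv21 : cross3 (eb 2) x 1 = x 0 := by rw [hcr1]; simp [eb, EuclideanSpace.single_apply]
  have hv22 : cross3 (eb 2) x 2 = 0 := by rw [hcr2]; simp [eb, EuclideanSpace.single_apply]
  have hw00 : cross3 (eb 0) (X x) 0 = 0 := by rw [hcr0]; simp [eb, EuclideanSpace.single_apply]
  have hw01 : cross3 (eb 0) (X x) 1 = -X x 2 := by rw [hcr1]; simp [eb, EuclideanSpace.single_apply]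
  have hw02 : cross3 (eb 0) (X x) 2 = X x 1 := by rw [hcr2]; simp [eb, EuclideanSpace.single_apply]
  have hw10 : cross3 (eb 1) (X x) 0 = X x 2 := by rw [hcr0]; simp [eb, EuclideanSpace.single_apply]
  have hw11 : cross3 (eb 1) (X x) 1 = 0 := by rw [hcr1]; simp [eb, EuclideanSpace.single_apply]
  have hw12 : cross3 (eb 1) (X x) 2 = -X x 0 := by rw [hcr2]; simp [eb, EuclideanSpace.single_apply]
  have hw20 : cross3 (eb 2) (X x) 0 = -X x 1 := by rw [hcr0]; simp [eb, EuclideanSpace.single_apply]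
  have hw21 : cross3 (eb 2) (X x) 1 = X x 0 := by rw [hcr1]; simp [eb, EuclideanSpace.single_apply]
  have hw22 : cross3 (eb 2) (X x) 2 = 0 := by rw [hcr2]; simp [eb, EuclideanSpace.single_apply]
  have hx1 : x 0 * x 0 + x 1 * x 1 + x 2 * x 2 = 1 := by rw [← inner_three]; exact hxx
  have htpx : tproj x x = 0 := by rw [htp, hxx]; simp
  have tp_zero : tproj x 0 = 0 := by rw [htp]; simp
  have tp_sub : ∀ p q : E3, tproj x (p - q) = tproj x p - tproj x q := by
    intro p q; rw [htp, htp, htp, inner_sub_right]; module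
  have tp_add : ∀ p q : E3, tproj x (p + q) = tproj x p + tproj x q := by
    intro p q; rw [htp, htp, htp, inner_add_right]; module
  have tp_smul : ∀ (c : ℝ) (p : E3), tproj x (c • p) = c • tproj x p := by
    intro c p; rw [htp, htp, inner_smul_right]; module
  obtain ⟨B, hB⟩ : ∃ B : Fin 3 → E3,
      ∀ k, B k = tproj x (fderiv ℝ X x (tproj x (eb k))) := ⟨_, fun _ => rfl⟩
  have hbasis : ∀ w : E3, w = w 0 • eb 0 + w 1 • eb 1 + w 2 • eb 2 := by
    intro w; ext k; fin_cases k <;> simp [eb, EuclideanSpace.single_apply]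
  have hlinB : ∀ w : E3, tproj x (fderiv ℝ X x (tproj x w))
      = w 0 • B 0 + w 1 • B 1 + w 2 • B 2 := by
    intro w
    conv_lhs => rw [hbasis w]
    rw [tp_add, tp_add, tp_smul, tp_smul, tp_smul, map_add, map_add, map_smul, map_smul,
      map_smul, tp_add, tp_add, tp_smul, tp_smul, tp_smul, hB 0, hB 1, hB 2]
  have hBr : ∀ k, ⟪x, B k⟫ = 0 := by
    intro k
    rw [hB, htp, inner_sub_right, inner_smul_right, hxx]
    ring
  have hBs : x 0 • B 0 + x 1 • B 1 + x 2 • B 2 = 0 := by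
    rw [← hlinB x, htpx, map_zero, tp_zero]
  have hs : ∀ j : Fin 3, x 0 * B 0 j + x 1 * B 1 j + x 2 * B 2 j = 0 := by
    intro j
    have := congrArg (fun z : E3 => z j) hBs
    simpa using this
  have hsplit : ∀ z : E3, ‖z‖ ^ 2 = ‖tproj x z‖ ^ 2 + ⟪x, z⟫ ^ 2 := by
    intro z
    rw [htp z, norm_sub_sq_real, norm_smul, real_inner_smul_right]
    have hnx : ‖x‖ = 1 := hx
    rw [hnx, real_inner_comm z x]
    simp [mul_pow]
    ring
  have hvx : ∀ i, ⟪x, cross3 (eb i) x⟫ = 0 := by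
    intro i
    rw [inner_three]
    fin_cases i <;> (rw [hcr0, hcr1, hcr2]) <;>
      simp [eb, EuclideanSpace.single_apply] <;> ring
  have htri : ∀ i, ⟪x, cross3 (eb i) (X x)⟫ = -⟪X x, cross3 (eb i) x⟫ := by
    intro i
    rw [inner_three, inner_three]
    fin_cases i <;> (rw [hcr0, hcr1, hcr2, hcr0, hcr1, hcr2]) <;>
      simp [eb, EuclideanSpace.single_apply] <;> ring
  have horth : ∀ i, ⟪x, fderiv ℝ X x (rotF i x) - cross3 (eb i) (X x)⟫ = 0 := by
    intro i
    have h3 := tangent_deriv X hX htan x hx i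
    rw [inner_sub_right, htri i]
    have hsym : ⟪x, fderiv ℝ X x (rotF i x)⟫ = ⟪fderiv ℝ X x (cross3 (eb i) x), x⟫ := by
      rw [rotF]; exact real_inner_comm _ _
    rw [hsym]
    linarith [h3]
  have htpv : ∀ i, tproj x (cross3 (eb i) x) = cross3 (eb i) x := by
    intro i; rw [htp, hvx i]; simp
  have hmain : ∀ i, tproj x (fderiv ℝ X x (rotF i x) - cross3 (eb i) (X x))
      = ((cross3 (eb i) x) 0 • B 0 + (cross3 (eb i) x) 1 • B 1 + (cross3 (eb i) x) 2 • B 2)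
        - tproj x (cross3 (eb i) (X x)) := by
    intro i
    rw [tp_sub, rotF]
    congr 1
    rw [← hlinB (cross3 (eb i) x), htpv i]
  simp only [Fin.sum_univ_three]
  rw [hsplit (fderiv ℝ X x (rotF 0 x) - cross3 (eb 0) (X x)), horth 0,
      hsplit (fderiv ℝ X x (rotF 1 x) - cross3 (eb 1) (X x)), horth 1,
      hsplit (fderiv ℝ X x (rotF 2 x) - cross3 (eb 2) (X x)), horth 2,
      hmain 0, hmain 1, hmain 2, hcov (eb 0), hcov (eb 1), hcov (eb 2),
      ← hB 0, ← hB 1, ← hB 2]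
  have n2 : ∀ z : E3, ‖z‖ ^ 2 = z 0 ^ 2 + z 1 ^ 2 + z 2 ^ 2 := by
    intro z; rw [← real_inner_self_eq_norm_sq, inner_three]; ring
  have hBr0 := hBr 0; have hBr1 := hBr 1; have hBr2 := hBr 2
  have hs0 := hs 0; have hs1 := hs 1; have hs2 := hs 2
  rw [inner_three] at hBr0 hBr1 hBr2
  have hux' : x 0 * X x 0 + x 1 * X x 1 + x 2 * X x 2 = 0 := by rw [← inner_three]; exact hux
  simp only [htp]
  simp only [n2]
  simp only [inner_three]
  simp only [PiLp.sub_apply, PiLp.add_apply, PiLp.smul_apply, smul_eq_mul]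
  simp only [hv00, hv01, hv02, hv10, hv11, hv12, hv20, hv21, hv22,
    hw00, hw01, hw02, hw10, hw11, hw12, hw20, hw21, hw22]
  linear_combination (1*(B 2 2)^2 + 1*(B 2 1)^2 + 1*(B 2 0)^2 + 1*(B 1 2)^2 + 1*(B 1 1)^2 + 1*(B 1 0)^2 + 1*(B 0 2)^2 + 1*(B 0 1)^2 + 1*(B 0 0)^2 + (-1)*(X x 2)^2 + (-1)*(X x 1)^2 + (-1)*(X x 0)^2 + 1*(x 2)^2*(X x 2)^2 + 1*(x 2)^2*(X x 1)^2 + 1*(x 2)^2*(X x 0)^2 + 1*(x 1)^2*(X x 2)^2 + 1*(x 1)^2*(X x 1)^2 + 1*(x 1)^2*(X x 0)^2 + 1*(x 0)^2*(X x 2)^2 + 1*(x 0)^2*(X x 1)^2 + 1*(x 0)^2*(X x 0)^2) * hx1 + ((-2)*(B 2 2) + (-2)*(B 1 1) + (-2)*(B 0 0) + 2*(x 2)*(X x 2) + (-1)*(x 2)^3*(X x 2) + 2*(x 1)*(X x 1) + (-1)*(x 1)*(x 2)^2*(X x 1) + (-1)*(x 1)^2*(x 2)*(X x 2) + (-1)*(x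 1)^3*(X x 1) + 2*(x 0)*(X x 0) + (-1)*(x 0)*(x 2)^2*(X x 0) + (-1)*(x 0)*(x 1)^2*(X x 0) + (-1)*(x 0)^2*(x 2)*(X x 2) + (-1)*(x 0)^2*(x 1)*(X x 1) + (-1)*(x 0)^3*(X x 0)) * hux' + (2*(X x 0) + (-2)*(x 2)^2*(X x 0) + (-2)*(x 1)^2*(X x 0) + 2*(x 0)*(x 2)*(X x 2) + 2*(x 0)*(x 1)*(X x 1)) * hBr0 + (2*(X x 1) + (-2)*(x 2)^2*(X x 1) + 2*(x 1)*(x 2)*(X x 2) + 2*(x 0)*(x 1)*(X x 0) + (-2)*(x 0)^2*(X x 1)) * hBr1 + (2*(X x 2) + 2*(x 1)*(x 2)*(X x 1) + (-2)*(x 1)^2*(X x 2) + 2*(x 0)*(x 2)*(X x 0) + (-2)*(x 0)^2*(X x 2)) * hBr2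
    + ((-1)*(x 2)*(B 2 0) + (-1)*(x 1)*(B 1 0) + (-1)*(x 0)*(B 0 0)) * hs0 + ((-1)*(x 2)*(B 2 1) + (-1)*(x 1)*(B 1 1) + (-1)*(x 0)*(B 0 1)) * hs1 + ((-1)*(x 2)*(B 2 2) + (-1)*(x 1)*(B 1 2) + (-1)*(x 0)*(B 0 2)) * hs2
end
end
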